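/- Let p be a prime, n a positive integer, and C_1, C_2 codes of length n over Z_p with C_1 ⊆ C_2 ⊆ C_1^⊥. If C is a self-orthogonal code of length n over Z_{p^2} with π(C) = ι^{-1}(C) = C_1, then there exists a unique self-orthogonal code C' of length n over Z_{p^2} such that C ⊆ C', π(C') = C_1, and ι^{-1}(C') = C_2. -/

import Mathlib

open scoped BigOperators

set_option maxHeartbeats 1000000

namespace Paper

/-- Self-orthogonality of a set of vectors w.r.t. the standard inner product. -/
def sorth {m : ℕ} {ι : Type} [Fintype ι] (S : Set (ι → ZMod m)) : Prop :=
  ∀ x ∈ S, ∀ y ∈ S, ∑ i, x i * y i = 0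

/-- The dual (as a set) of a set of vectors w.r.t. the standard inner product. -/
def dualSet {m : ℕ} {ι : Type} [Fintype ι] (S : Set (ι → ZMod m)) : Set (ι → ZMod m) :=
  {x | ∀ y ∈ S, ∑ i, x i * y i = 0}

/-- A set of vectors is doubly even if every element has Hamming weight divisible by 4. -/
def doublyEven {m : ℕ} {ι : Type} [Fintype ι] (S : Set (ι → ZMod m)) : Prop :=
  ∀ x ∈ S, 4 ∣ (Finset.univ.filter fun i => x i ≠ 0).card

/-- Coordinatewise reduction map `(Z_{p^2})^ι → (Z_p)^ι`. -/
def res (p : ℕ) [Fact p.Prime] {ι : Type} (v : ι → ZMod (p ^ 2)) : ι → ZMod p :=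
  fun i => ZMod.castHom (dvd_pow_self p (by norm_num)) (ZMod p) (v i)

/-- The injection `(Z_p)^ι → (Z_{p^2})^ι` induced by `Z_p ≅ pZ_{p^2} ⊆ Z_{p^2}`. -/
def iot (p : ℕ) {ι : Type} (v : ι → ZMod p) : ι → ZMod (p ^ 2) :=
  fun i => (p : ZMod (p ^ 2)) * (ZMod.cast (v i))

/-- Coordinatewise reduction map `(Z_4)^ι → (Z_2)^ι`. -/
def res4 {ι : Type} (v : ι → ZMod 4) : ι → ZMod 2 :=
  fun i => ZMod.castHom (by norm_num : (2:ℕ) ∣ 4) (ZMod 2) (v i)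

/-- The injection `(Z_2)^ι → (Z_4)^ι`. -/
def iot4 {ι : Type} (v : ι → ZMod 2) : ι → ZMod 4 :=
  fun i => (2 : ZMod 4) * (ZMod.cast (v i))

/-- Euclidean weight on `Z_4`. -/
def ewt (x : ZMod 4) : ℕ := if x = 0 then 0 else if x = 2 then 4 else 1

/-- A quaternary code is even if every codeword has Euclidean weight divisible by 8. -/
def evenCode {ι : Type} [Fintype ι] (S : Set (ι → ZMod 4)) : Prop :=
  ∀ x ∈ S, 8 ∣ ∑ i, ewt (x i)

/-- The code over `Z_q` generated by the rows of an integer matrix. -/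
def intRowSpan (q : ℕ) {κ ι : Type} (G : Matrix κ ι ℤ) :
    Submodule (ZMod q) (ι → ZMod q) :=
  Submodule.span (ZMod q) (Set.range fun i => fun c => ((G i c : ℤ) : ZMod q))

/-- The Gaussian binomial coefficient `[n choose k]_p`. -/
def gauss (p n k : ℕ) : ℚ :=
  ∏ i ∈ Finset.range k, ((p : ℚ) ^ n - (p : ℚ) ^ i) / ((p : ℚ) ^ k - (p : ℚ) ^ i)

section Aux

set_option linter.unusedSectionVars false

variable (p : ℕ) [Fact p.Prime]

private lemma hd : p ∣ p ^ 2 := dvd_pow_self p (by norm_num)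

private lemma pmul_eq_zero (x : ZMod (p^2)) (h : ZMod.castHom (hd p) (ZMod p) x = 0) :
    (p : ZMod (p^2)) * x = 0 := by
  haveI : NeZero (p^2) := ⟨pow_ne_zero 2 (Nat.Prime.ne_zero Fact.out)⟩
  obtain ⟨k, rfl⟩ := ZMod.natCast_zmod_surjective x
  rw [map_natCast] at h
  obtain ⟨j, rfl⟩ := (ZMod.natCast_eq_zero_iff k p).mp h
  have h2 : ((p^2 : ℕ) : ZMod (p^2)) = 0 := ZMod.natCast_self _
  calc (p : ZMod (p^2)) * ((p * j : ℕ) : ZMod (p^2))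
      = ((p^2 : ℕ) : ZMod (p^2)) * (j : ZMod (p^2)) := by push_cast; ring
    _ = 0 := by rw [h2, zero_mul]

private lemma pmul_congr (x y : ZMod (p^2))
    (h : ZMod.castHom (hd p) (ZMod p) x = ZMod.castHom (hd p) (ZMod p) y) :
    (p : ZMod (p^2)) * x = (p : ZMod (p^2)) * y := by
  have := pmul_eq_zero p (x - y) (by rw [map_sub, h, sub_self])
  rw [mul_sub, sub_eq_zero] at this
  exact this

private lemma rh (a : ZMod p) : ZMod.castHom (hd p) (ZMod p) (ZMod.cast a : ZMod (p^2)) = a :=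
  ZMod.ringHom_map_cast _ a

private lemma exists_cast (x : ZMod (p^2)) (h : ZMod.castHom (hd p) (ZMod p) x = 0) :
    ∃ a : ZMod p, (p : ZMod (p^2)) * ZMod.cast a = x := by
  haveI : NeZero (p^2) := ⟨pow_ne_zero 2 (Nat.Prime.ne_zero Fact.out)⟩
  obtain ⟨k, rfl⟩ := ZMod.natCast_zmod_surjective x
  rw [map_natCast] at h
  obtain ⟨j, rfl⟩ := (ZMod.natCast_eq_zero_iff k p).mp h
  refine ⟨(j : ZMod p), ?_⟩
  have h1 : (p : ZMod (p^2)) * ZMod.cast ((j : ZMod p)) = (p : ZMod (p^2)) * (j : ZMod (p^2)) :=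
    pmul_congr p _ _ (by rw [rh, map_natCast])
  rw [h1]; push_cast; ring

variable {ι : Type} [Fintype ι]

private lemma iot_add (u v : ι → ZMod p) : iot p (u + v) = iot p u + iot p v := by
  funext i
  show (p : ZMod (p^2)) * ZMod.cast (u i + v i)
      = p * ZMod.cast (u i) + p * ZMod.cast (v i)
  rw [← mul_add]
  exact pmul_congr p _ _ (by rw [rh, map_add, rh, rh])

private lemma iot_zero : iot p (0 : ι → ZMod p) = 0 := by
  funext i
  show (p : ZMod (p^2)) * ZMod.cast (0 : ZMod p) = 0
  exact pmul_eq_zero p _ (by rw [rh])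

private lemma iot_smul (a : ZMod (p^2)) (v : ι → ZMod p) :
    a • iot p v = iot p (ZMod.castHom (hd p) (ZMod p) a • v) := by
  funext i
  show a * ((p : ZMod (p^2)) * ZMod.cast (v i))
      = (p : ZMod (p^2)) * ZMod.cast (ZMod.castHom (hd p) (ZMod p) a * v i)
  rw [← mul_assoc, mul_comm a, mul_assoc]
  exact pmul_congr p _ _ (by rw [map_mul, rh, rh])

private lemma iot_sub (u v : ι → ZMod p) : iot p (u - v) = iot p u - iot p v := by
  have := iot_add p (u - v) v
  rw [sub_add_cancel] at this
  rw [this]; ring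

private lemma res_iot (v : ι → ZMod p) : res p (iot p v) = 0 := by
  funext i
  show ZMod.castHom (hd p) (ZMod p) ((p : ZMod (p^2)) * ZMod.cast (v i)) = 0
  rw [map_mul, map_natCast, ZMod.natCast_self, zero_mul]

private lemma res_add (u v : ι → ZMod (p^2)) : res p (u + v) = res p u + res p v := by
  funext i; exact map_add _ _ _

private lemma inner_iot (c : ι → ZMod (p^2)) (v : ι → ZMod p)
    (h : ∑ i, res p c i * v i = 0) : ∑ i, c i * iot p v i = 0 := by
  have h1 : ∑ i, c i * iot p v i = (p : ZMod (p^2)) * ∑ i, c i * ZMod.cast (v i) := by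
    rw [Finset.mul_sum]
    refine Finset.sum_congr rfl fun i _ => ?_
    show c i * ((p : ZMod (p^2)) * ZMod.cast (v i)) = _
    ring
  rw [h1]
  apply pmul_eq_zero
  rw [map_sum, ← h]
  refine Finset.sum_congr rfl fun i _ => ?_
  rw [map_mul, rh]
  rfl

end Aux

/-- if `C₁ ⊆ C₂ ⊆ C₁^⊥` and `C` is a self-orthogonal code over `Z_{p^2}` with
`π(C) = ι⁻¹(C) = C₁`, then there is a unique self-orthogonal code `C'` with `C ⊆ C'`,
`π(C') = C₁` and `ι⁻¹(C') = C₂`. -/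
theorem stmt6 (p n : ℕ) [Fact p.Prime] (hn : 0 < n)
    (C1 C2 : Submodule (ZMod p) (Fin n → ZMod p))
    (h12 : C1 ≤ C2)
    (h2d : (C2 : Set (Fin n → ZMod p)) ⊆ dualSet (C1 : Set (Fin n → ZMod p)))
    (C : Submodule (ZMod (p ^ 2)) (Fin n → ZMod (p ^ 2)))
    (hso : sorth (C : Set (Fin n → ZMod (p ^ 2))))
    (hres : res p '' (C : Set (Fin n → ZMod (p ^ 2))) = (C1 : Set (Fin n → ZMod p)))
    (htor : iot p ⁻¹' (C : Set (Fin n → ZMod (p ^ 2))) = (C1 : Set (Fin n → ZMod p))) :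
    ∃! C' : Submodule (ZMod (p ^ 2)) (Fin n → ZMod (p ^ 2)),
      sorth (C' : Set (Fin n → ZMod (p ^ 2))) ∧ C ≤ C' ∧
      res p '' (C' : Set (Fin n → ZMod (p ^ 2))) = (C1 : Set (Fin n → ZMod p)) ∧
      iot p ⁻¹' (C' : Set (Fin n → ZMod (p ^ 2))) = (C2 : Set (Fin n → ZMod p)) := by
  classical
  have hp2 : (p : ZMod (p^2)) * (p : ZMod (p^2)) = 0 := by
    have h2 : ((p^2 : ℕ) : ZMod (p^2)) = 0 := ZMod.natCast_self _
    calc (p : ZMod (p^2)) * (p : ZMod (p^2)) = ((p^2 : ℕ) : ZMod (p^2)) := by push_cast; ring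
      _ = 0 := h2
  set D : Submodule (ZMod (p^2)) (Fin n → ZMod (p^2)) :=
    { carrier := {x | ∃ c ∈ C, ∃ v ∈ (C2 : Set (Fin n → ZMod p)), x = c + iot p v}
      add_mem' := by
        rintro x y ⟨c, hc, v, hv, rfl⟩ ⟨c', hc', v', hv', rfl⟩
        exact ⟨c + c', C.add_mem hc hc', v + v', C2.add_mem hv hv', by rw [iot_add]; abel⟩
      zero_mem' := ⟨0, C.zero_mem, 0, C2.zero_mem, by rw [iot_zero]; simp⟩
      smul_mem' := by
        rintro a x ⟨c, hc, v, hv, rfl⟩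
        exact ⟨a • c, C.smul_mem a hc, _ • v, C2.smul_mem _ hv, by rw [smul_add, iot_smul]⟩ }
    with hDdef
  have hmemD : ∀ x, x ∈ D ↔ ∃ c ∈ C, ∃ v ∈ (C2 : Set (Fin n → ZMod p)), x = c + iot p v :=
    fun x => Iff.rfl
  have hCD : C ≤ D := by
    intro x hx
    exact ⟨x, hx, 0, C2.zero_mem, by rw [iot_zero, add_zero]⟩
  -- key orthogonality lemma
  have key : ∀ (c : Fin n → ZMod (p^2)) (v : Fin n → ZMod p),
      res p c ∈ (C1 : Set (Fin n → ZMod p)) → v ∈ (C2 : Set (Fin n → ZMod p)) →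
      ∑ i, c i * iot p v i = 0 := by
    intro c v hc hv
    apply inner_iot
    have := h2d hv (res p c) hc
    rw [← this]
    exact Finset.sum_congr rfl fun i _ => mul_comm _ _
  have hresmem : ∀ c, c ∈ C → res p c ∈ (C1 : Set (Fin n → ZMod p)) := by
    intro c hc; rw [← hres]; exact ⟨c, hc, rfl⟩
  -- self-orthogonality of D
  have hsoD : sorth (D : Set (Fin n → ZMod (p^2))) := by
    rintro x ⟨c, hc, u, hu, rfl⟩ y ⟨c', hc', v, hv, rfl⟩
    have h1 : ∑ i, c i * c' i = 0 := hso c hc c' hc'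
    have h2 : ∑ i, c i * iot p v i = 0 := key c v (hresmem c hc) hv
    have h3 : ∑ i, c' i * iot p u i = 0 := key c' u (hresmem c' hc') hu
    have h4 : ∑ i, iot p u i * iot p v i = 0 := by
      apply Finset.sum_eq_zero
      intro i _
      show ((p : ZMod (p^2)) * ZMod.cast (u i)) * ((p : ZMod (p^2)) * ZMod.cast (v i)) = 0
      calc ((p : ZMod (p^2)) * ZMod.cast (u i)) * ((p : ZMod (p^2)) * ZMod.cast (v i))
          = ((p : ZMod (p^2)) * p) * (ZMod.cast (u i) * ZMod.cast (v i)) := by ring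
        _ = 0 := by rw [hp2, zero_mul]
    calc ∑ i, (c i + iot p u i) * (c' i + iot p v i)
        = (∑ i, c i * c' i) + (∑ i, c i * iot p v i) + (∑ i, c' i * iot p u i)
          + ∑ i, iot p u i * iot p v i := by
          rw [← Finset.sum_add_distrib, ← Finset.sum_add_distrib, ← Finset.sum_add_distrib]
          exact Finset.sum_congr rfl fun i _ => by ring
      _ = 0 := by rw [h1, h2, h3, h4]; ring
  -- residue code of D
  have hresD : res p '' (D : Set (Fin n → ZMod (p^2))) = (C1 : Set (Fin n → ZMod p)) := by
    apply Set.Subset.antisymm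
    · rintro _ ⟨x, ⟨c, hc, v, hv, rfl⟩, rfl⟩
      have heq : res p (c + iot p v) = res p c := by rw [res_add, res_iot, add_zero]
      rw [heq]
      exact hresmem c hc
    · rw [← hres]
      exact Set.image_mono fun x hx => hCD hx
  -- torsion code of D
  have htorD : iot p ⁻¹' (D : Set (Fin n → ZMod (p^2))) = (C2 : Set (Fin n → ZMod p)) := by
    apply Set.Subset.antisymm
    · intro w hw
      obtain ⟨c, hc, v, hv, heq⟩ := hw
      have hceq : iot p (w - v) = c := by rw [iot_sub, heq]; abel
      have h1 : w - v ∈ iot p ⁻¹' (C : Set (Fin n → ZMod (p^2))) := by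
        simp only [Set.mem_preimage, hceq]
        exact hc
      rw [htor] at h1
      have h2 : w - v ∈ C2 := h12 h1
      have h3 := C2.add_mem h2 hv
      rw [sub_add_cancel] at h3
      exact h3
    · intro v hv
      exact ⟨0, C.zero_mem, v, hv, by rw [zero_add]⟩
  refine ⟨D, ⟨hsoD, hCD, hresD, htorD⟩, ?_⟩
  rintro D' ⟨hso', hCD', hres', htor'⟩
  apply le_antisymm
  · -- D' ≤ D
    intro x hx
    have hrx : res p x ∈ (C1 : Set (Fin n → ZMod p)) := by
      rw [← hres']; exact ⟨x, hx, rfl⟩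
    rw [← hres] at hrx
    obtain ⟨c, hc, hrc⟩ := hrx
    have hxc : ∀ i, ZMod.castHom (hd p) (ZMod p) ((x - c) i) = 0 := by
      intro i
      show ZMod.castHom (hd p) (ZMod p) (x i - c i) = 0
      have h0 : ZMod.castHom (hd p) (ZMod p) (c i) = ZMod.castHom (hd p) (ZMod p) (x i) :=
        congrFun hrc i
      rw [map_sub, h0, sub_self]
    choose w hw using fun i => exists_cast p ((x - c) i) (hxc i)
    have hiw : iot p w = x - c := funext hw
    have hxD' : x - c ∈ D' := D'.sub_mem hx (hCD' hc)
    have hwC2 : w ∈ (C2 : Set (Fin n → ZMod p)) := by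
      rw [← htor']
      show iot p w ∈ (D' : Set (Fin n → ZMod (p^2)))
      rw [hiw]
      exact hxD'
    exact ⟨c, hc, w, hwC2, by rw [hiw]; abel⟩
  · -- D ≤ D'
    rintro x ⟨c, hc, v, hv, rfl⟩
    have h1 : iot p v ∈ D' := by
      have : v ∈ iot p ⁻¹' (D' : Set (Fin n → ZMod (p^2))) := by rw [htor']; exact hv
      exact this
    exact D'.add_mem (hCD' hc) h1

end Paper
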